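/- Let X be a cubespace with the glueing property, and s ≥ 0. Then x ∼_s y (i.e. there exist c, c' ∈ C^{s+1}(X) with c(1⃗) = x, c'(1⃗) = y, and c(ω) = c'(ω) for all ω ≠ 1⃗) holds if and only if the configuration equal to x at every vertex except the top vertex, where it equals y, lies in C^{s+1}(X). -/

import Mathlib

/-- A morphism of discrete cubes `{0,1}^k → {0,1}^ℓ`: each coordinate function is
identically `0`, identically `1`, equal to `ω_j`, or equal to `1 - ω_j`. -/
def IsCubeMorphism {k l : ℕ} (ρ : (Fin k → Bool) → (Fin l → Bool)) : Prop :=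
  ∀ i : Fin l, (∀ ω, ρ ω i = false) ∨ (∀ ω, ρ ω i = true) ∨
    (∃ j, ∀ ω, ρ ω i = ω j) ∨ (∃ j, ∀ ω, ρ ω i = !(ω j))

/-- A cubespace: a set `X` with cube sets `C^k(X) ⊆ X^{{0,1}^k}`, with `C^0(X) = X`,
closed under precomposition with morphisms of discrete cubes. -/
structure Cubespace (X : Type*) where
  C : ∀ k : ℕ, Set ((Fin k → Bool) → X)
  C_zero : C 0 = Set.univ
  C_morph : ∀ {k l : ℕ} (ρ : (Fin k → Bool) → (Fin l → Bool)),
    IsCubeMorphism ρ → ∀ c ∈ C l, (c ∘ ρ) ∈ C k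

/-- The top vertex `(1,…,1)` of the discrete cube `{0,1}^k`. -/
def topVert (k : ℕ) : Fin k → Bool := fun _ => true

/-- An `(n+1)`-corner: a configuration whose restriction to every lower
codimension-1 face is an `n`-cube (the value at the top vertex is irrelevant). -/
def IsCubeCorner {X : Type*} (CS : Cubespace X) (n : ℕ) (lam : (Fin (n + 1) → Bool) → X) : Prop :=
  ∀ i : Fin (n + 1), (fun ω : Fin n → Bool => lam (i.insertNth false ω)) ∈ CS.C n

/-- `(n+1)`-completion: every `(n+1)`-corner can be completed to an `(n+1)`-cube. -/
def HasCompletion {X : Type*} (CS : Cubespace X) (n : ℕ) : Prop :=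
  ∀ lam : (Fin (n + 1) → Bool) → X, IsCubeCorner CS n lam →
    ∃ x : X, (fun ω => if ω = topVert (n + 1) then x else lam ω) ∈ CS.C (n + 1)

/-- `k`-uniqueness: two `k`-cubes agreeing at all vertices except the top vertex are equal. -/
def HasUniqueness {X : Type*} (CS : Cubespace X) (k : ℕ) : Prop :=
  ∀ c ∈ CS.C k, ∀ c' ∈ CS.C k, (∀ ω, ω ≠ topVert k → c ω = c' ω) → c = c'

/-- The glueing property: two `(n+1)`-cubes agreeing along a common codimension-1 face
can be glued to form another `(n+1)`-cube. -/
def HasGlueing {X : Type*} (CS : Cubespace X) : Prop :=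
  ∀ (n : ℕ) (c c' : (Fin (n + 1) → Bool) → X), c ∈ CS.C (n + 1) → c' ∈ CS.C (n + 1) →
    (∀ ω : Fin n → Bool, c (Fin.snoc ω true) = c' (Fin.snoc ω false)) →
    (fun ω : Fin (n + 1) → Bool => if ω (Fin.last n) = true then c' ω else c ω) ∈ CS.C (n + 1)

/-- A cubespace morphism: maps `k`-cubes to `k`-cubes for every `k`. -/
def IsMorphism {X Y : Type*} (CX : Cubespace X) (CY : Cubespace Y) (f : X → Y) : Prop :=
  ∀ k : ℕ, ∀ c ∈ CX.C k, (fun ω => f (c ω)) ∈ CY.C k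

/-- A fibration: a cubespace morphism such that every corner of `X` lying over
(all but the top vertex of) a cube of `Y` can be completed to a cube of `X`
mapping onto that cube.  (The `k = 0` case of corner completion is surjectivity.) -/
def IsFibration {X Y : Type*} (CX : Cubespace X) (CY : Cubespace Y) (f : X → Y) : Prop :=
  IsMorphism CX CY f ∧ Function.Surjective f ∧
  ∀ (n : ℕ) (lam : (Fin (n + 1) → Bool) → X) (c : (Fin (n + 1) → Bool) → Y),
    IsCubeCorner CX n lam → c ∈ CY.C (n + 1) →
    (∀ ω, ω ≠ topVert (n + 1) → f (lam ω) = c ω) →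
    ∃ x : X, f x = c (topVert (n + 1)) ∧
      (fun ω => if ω = topVert (n + 1) then x else lam ω) ∈ CX.C (n + 1)

/-- Constant configurations are cubes in any cubespace. -/
lemma const_mem_cubes {X : Type*} (CS : Cubespace X) (k : ℕ) (x : X) :
    (fun _ : Fin k → Bool => x) ∈ CS.C k := by
  have h := CS.C_morph (k := k) (l := 0) (fun _ _ => true)
    (fun i => i.elim0) (fun _ => x) (by rw [CS.C_zero]; trivial)
  exact h

/-- In a cubespace with the glueing property, `x ∼_s y` (there exist
`(s+1)`-cubes `c, c'` agreeing off the top vertex with `c(⃗1) = x`, `c'(⃗1) = y`) holds iff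
the configuration equal to `x` at every vertex except the top vertex, where it is `y`, is an
`(s+1)`-cube. -/

theorem sim_iff_corner_config {X : Type*} (CS : Cubespace X) (hglue : HasGlueing CS)
    (s : ℕ) (x y : X) :
    (∃ c ∈ CS.C (s + 1), ∃ c' ∈ CS.C (s + 1),
        c (topVert (s + 1)) = x ∧ c' (topVert (s + 1)) = y ∧
        ∀ ω, ω ≠ topVert (s + 1) → c ω = c' ω) ↔
      (fun ω => if ω = topVert (s + 1) then y else x) ∈ CS.C (s + 1) := by
  constructor
  · rintro ⟨c, hc, c', hc', hcx, hc'y, hagree⟩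
    have key : ∀ j, j ≤ s + 1 → ∃ d ∈ CS.C (s + 1), ∃ e ∈ CS.C (s + 1),
        d (topVert (s + 1)) = y ∧ e (topVert (s + 1)) = x ∧
        (∀ ω, ω ≠ topVert (s + 1) → d ω = e ω) ∧
        (∀ ω ω' : Fin (s + 1) → Bool,
          (∀ i : Fin (s + 1), (i : ℕ) < s + 1 - j → ω i = ω' i) → e ω = e ω') := by
      intro j
      induction j with
      | zero =>
        intro _
        refine ⟨c', hc', c, hc, hc'y, hcx, fun ω h => (hagree ω h).symm, ?_⟩
        intro ω ω' h
        have : ω = ω' := funext fun i => h i (by simpa using i.isLt)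
        rw [this]
      | succ j ih =>
        intro hj
        obtain ⟨d, hd, e, he, hdy, hex, hde, hdep⟩ := ih (Nat.le_of_succ_le hj)
        have hjs : j ≤ s := Nat.lt_succ_iff.mp hj
        set k : ℕ := s - j with hk
        have hkk : s + 1 - j = k + 1 := by omega
        have hkk' : s + 1 - (j + 1) = k := by omega
        have hkle : k ≤ s := by omega
        rw [hkk] at hdep
        set kf : Fin (s + 1) := ⟨k, by omega⟩ with hkf
        have hkfval : (kf : ℕ) = k := rfl
        set τ : (Fin (s + 1) → Bool) → (Fin (s + 1) → Bool) :=
          fun ω i => ω (Equiv.swap kf (Fin.last s) i) with hτdef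
        have hτ : IsCubeMorphism τ := fun i =>
          Or.inr (Or.inr (Or.inl ⟨Equiv.swap kf (Fin.last s) i, fun ω => rfl⟩))
        set σ : (Fin (s + 1) → Bool) → (Fin (s + 1) → Bool) :=
          fun ω i => if i = Fin.last s then !(ω i) else ω i with hσdef
        have hσ : IsCubeMorphism σ := by
          intro i
          by_cases h : i = Fin.last s
          · exact Or.inr (Or.inr (Or.inr ⟨i, fun ω => by simp [hσdef, h]⟩))
          · exact Or.inr (Or.inr (Or.inl ⟨i, fun ω => by simp [hσdef, h]⟩))
        set ρ : (Fin (s + 1) → Bool) → (Fin (s + 1) → Bool) :=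
          fun ω i => if i = Fin.last s then true else ω i with hρdef
        have hρ : IsCubeMorphism ρ := by
          intro i
          by_cases h : i = Fin.last s
          · exact Or.inr (Or.inl (fun ω => by simp [hρdef, h]))
          · exact Or.inr (Or.inr (Or.inl ⟨i, fun ω => by simp [hρdef, h]⟩))
        have hc₀ : (e ∘ τ) ∈ CS.C (s + 1) := CS.C_morph τ hτ e he
        have hc₀' : (d ∘ τ) ∈ CS.C (s + 1) := CS.C_morph τ hτ d hd
        have hc₁ : ((e ∘ τ) ∘ σ) ∈ CS.C (s + 1) := CS.C_morph σ hσ _ hc₀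
        have hτtop : τ (topVert (s + 1)) = topVert (s + 1) := rfl
        have hτne : ∀ ω, ω ≠ topVert (s + 1) → τ ω ≠ topVert (s + 1) := by
          intro ω hω h
          apply hω
          funext i
          have := congrFun h (Equiv.swap kf (Fin.last s) i)
          simpa [hτdef, Equiv.swap_apply_self, topVert] using this
        have hglued := hglue s ((e ∘ τ) ∘ σ) (d ∘ τ) hc₁ hc₀' ?_
        swap
        · intro ω
          have hσs : σ (Fin.snoc ω true) = Fin.snoc ω false := by
            funext i
            rcases Fin.eq_castSucc_or_eq_last i with ⟨i, rfl⟩ | rfl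
            · simp [hσdef, (Fin.castSucc_lt_last i).ne]
            · simp [hσdef]
          have hne : (Fin.snoc ω false : Fin (s + 1) → Bool) ≠ topVert (s + 1) := by
            intro h
            have := congrFun h (Fin.last s)
            simp [topVert] at this
          calc ((e ∘ τ) ∘ σ) (Fin.snoc ω true) = e (τ (Fin.snoc ω false)) := by
                simp only [Function.comp_apply, hσs]
            _ = d (τ (Fin.snoc ω false)) := (hde _ (hτne _ hne)).symm
            _ = (d ∘ τ) (Fin.snoc ω false) := rfl
        set d₁ : (Fin (s + 1) → Bool) → X :=
          fun ω => if ω (Fin.last s) = true then (d ∘ τ) ω else ((e ∘ τ) ∘ σ) ω with hd₁def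
        have hd₁ : d₁ ∈ CS.C (s + 1) := hglued
        set e₁ : (Fin (s + 1) → Bool) → X := (e ∘ τ) ∘ ρ with he₁def
        have he₁ : e₁ ∈ CS.C (s + 1) := CS.C_morph ρ hρ _ hc₀
        have htopl : topVert (s + 1) (Fin.last s) = true := rfl
        have hρtop : ρ (topVert (s + 1)) = topVert (s + 1) := by
          funext i; simp [hρdef, topVert]
        refine ⟨d₁, hd₁, e₁, he₁, ?_, ?_, ?_, ?_⟩
        · show (if (topVert (s + 1)) (Fin.last s) = true then (d ∘ τ) (topVert (s + 1))
              else ((e ∘ τ) ∘ σ) (topVert (s + 1))) = y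
          rw [if_pos htopl]
          show d (τ (topVert (s + 1))) = y
          rw [hτtop, hdy]
        · show e (τ (ρ (topVert (s + 1)))) = x
          rw [hρtop, hτtop, hex]
        · intro ω hω
          by_cases hb : ω (Fin.last s) = true
          · have hρω : ρ ω = ω := by
              funext i
              by_cases h : i = Fin.last s
              · simp only [hρdef]; rw [if_pos h, h, hb]
              · simp only [hρdef]; rw [if_neg h]
            show (if ω (Fin.last s) = true then (d ∘ τ) ω else ((e ∘ τ) ∘ σ) ω)
                = e (τ (ρ ω))
            rw [if_pos hb, hρω]
            exact hde _ (hτne _ hω)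
          · have hb' : ω (Fin.last s) = false := by
              simpa using hb
            have hσρ : σ ω = ρ ω := by
              funext i
              simp only [hσdef, hρdef]
              by_cases h : i = Fin.last s
              · rw [if_pos h, if_pos h, h, hb']; rfl
              · rw [if_neg h, if_neg h]
            show (if ω (Fin.last s) = true then (d ∘ τ) ω else ((e ∘ τ) ∘ σ) ω)
                = e (τ (ρ ω))
            rw [if_neg hb]
            show e (τ (σ ω)) = e (τ (ρ ω))
            rw [hσρ]
        · intro ω ω' hagr
          rw [hkk'] at hagr
          show e (τ (ρ ω)) = e (τ (ρ ω'))
          apply hdep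
          intro i hi
          show ρ ω (Equiv.swap kf (Fin.last s) i) = ρ ω' (Equiv.swap kf (Fin.last s) i)
          rcases Nat.lt_succ_iff_lt_or_eq.mp hi with hlt | heq
          · have hik : i ≠ kf := by
              intro h
              have := congrArg Fin.val h
              rw [hkfval] at this
              omega
            have hil : i ≠ Fin.last s := by
              intro h
              have := congrArg Fin.val h
              simp [Fin.val_last] at this
              omega
            rw [Equiv.swap_apply_of_ne_of_ne hik hil]
            simp only [hρdef]
            rw [if_neg hil, if_neg hil]
            exact hagr i hlt
          · have hikf : i = kf := Fin.ext heq
            rw [hikf, Equiv.swap_apply_left]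
            simp [hρdef]
    obtain ⟨d, hd, e, he, hdy, hex, hde, hdep⟩ := key (s + 1) le_rfl
    have hconst : ∀ ω, e ω = x := by
      intro ω
      have := hdep ω (topVert (s + 1)) (fun i hi => by omega)
      rw [this, hex]
    have hfd : (fun ω => if ω = topVert (s + 1) then y else x) = d := by
      funext ω
      by_cases h : ω = topVert (s + 1)
      · rw [if_pos h, h, hdy]
      · rw [if_neg h, hde ω h, hconst]
    rw [hfd]
    exact hd
  · intro h
    refine ⟨fun _ => x, const_mem_cubes CS _ x, _, h, rfl, ?_, ?_⟩
    · simp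
    · intro ω hω
      simp [hω]
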